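/- Let F(x;γ) = cos x (γ cos γ + sin γ) + x sin x sin γ − sin γ cos γ − γ for 0 < γ < π. Then F(0;γ) = 2 sin²(γ/2)(sin γ − γ) < 0, F(γ;γ) = 0, and F(x;γ) ≤ 0 for all x ∈ [−2π, 2π], with equality only at x = ±γ. -/

import Mathlib

open Real


lemma lemA (u v : ℝ) (hu0 : 0 < u) (huπ : u < π) (huv : u < v) (hv : v ≤ 2*π) :
    u * Real.sin v < v * Real.sin u := by
  rcases le_or_gt v π with hvπ | hvπ
  · have h0v : (0:ℝ) ≠ v := by linarith
    have hb : 0 < u / v := div_pos hu0 (by linarith)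
    have ha : 0 < 1 - u / v := by
      have : u / v < 1 := (div_lt_one (by linarith)).2 huv
      linarith
    have hcc := strictConcaveOn_sin_Icc.2 (x := 0) (y := v)
      ⟨le_rfl, pi_pos.le⟩ ⟨by linarith, hvπ⟩ h0v ha hb (by ring)
    simp only [smul_eq_mul, Real.sin_zero, mul_zero, zero_add] at hcc
    have hxy : u/v * v = u := by field_simp
    rw [hxy] at hcc
    have hv0 : 0 < v := by linarith
    calc u * Real.sin v = v * (u/v * Real.sin v) := by field_simp
    _ < v * Real.sin u := by exact (mul_lt_mul_iff_right₀ hv0).2 hcc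
  · have hsv : Real.sin v ≤ 0 := by
      have : Real.sin (v - 2*π) ≤ 0 := by
        apply Real.sin_nonpos_of_nonpos_of_neg_pi_le <;> linarith
      rwa [Real.sin_sub_two_pi] at this
    have hsu : 0 < Real.sin u := Real.sin_pos_of_pos_of_lt_pi hu0 huπ
    nlinarith

lemma lemB (a b : ℝ) (ha : 0 < a) (hab : a < b) (hb : b < π) :
    b * Real.cos b * Real.sin a < a * Real.cos a * Real.sin b := by
  have key := lemA (b - a) (a + b) (by linarith) (by linarith) (by linarith) (by linarith)
  rw [Real.sin_sub, Real.sin_add] at key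
  nlinarith [key]

lemma main_aux (γ : ℝ) (hγ0 : 0 < γ) (hγπ : γ < π) (x : ℝ) (hx0 : 0 ≤ x) (hx2 : x ≤ 2*π) :
    Real.cos x * (γ * Real.cos γ + Real.sin γ) + x * Real.sin x * Real.sin γ
        - Real.sin γ * Real.cos γ - γ ≤ 0 ∧
    (Real.cos x * (γ * Real.cos γ + Real.sin γ) + x * Real.sin x * Real.sin γ
        - Real.sin γ * Real.cos γ - γ = 0 → x = γ) := by
  set f : ℝ → ℝ := fun t => Real.cos t * (γ * Real.cos γ + Real.sin γ)
      + t * Real.sin t * Real.sin γ - Real.sin γ * Real.cos γ - γ with hf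
  have hsγ : 0 < Real.sin γ := Real.sin_pos_of_pos_of_lt_pi hγ0 hγπ
  have hd : ∀ t : ℝ, HasDerivAt f
      (t * Real.cos t * Real.sin γ - γ * Real.cos γ * Real.sin t) t := by
    intro t
    have h1 := (Real.hasDerivAt_cos t).mul_const (γ * Real.cos γ + Real.sin γ)
    have h2 := ((hasDerivAt_id t).mul (Real.hasDerivAt_sin t)).mul_const (Real.sin γ)
    have h3 := ((h1.add h2).sub_const (Real.sin γ * Real.cos γ)).sub_const γ
    convert h3 using 1
    · rfl
    · rfl
    · funext y; simp [hf, Pi.mul_apply]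
    · simp [id]; ring
  have hcont : Continuous f := by fun_prop
  have hfγ : f γ = 0 := by
    simp only [hf]
    linear_combination γ * Real.sin_sq_add_cos_sq γ
  have mono1 : StrictMonoOn f (Set.Icc 0 γ) := by
    apply strictMonoOn_of_deriv_pos (convex_Icc 0 γ) hcont.continuousOn
    intro t ht
    rw [interior_Icc] at ht
    rw [(hd t).deriv]
    have := lemB t γ ht.1 ht.2 hγπ
    linarith
  have anti1 : StrictAntiOn f (Set.Icc γ π) := by
    apply strictAntiOn_of_deriv_neg (convex_Icc γ π) hcont.continuousOn
    intro t ht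
    rw [interior_Icc] at ht
    rw [(hd t).deriv]
    have := lemB γ t hγ0 ht.1 ht.2
    linarith
  rcases le_or_gt x π with hxπ | hxπ
  · rcases lt_trichotomy x γ with h | h | h
    · have : f x < f γ := mono1 ⟨hx0, h.le⟩ ⟨hγ0.le, le_rfl⟩ h
      rw [hfγ] at this
      exact ⟨this.le, fun he => absurd he this.ne⟩
    · subst h
      exact ⟨hfγ.le, fun _ => rfl⟩
    · have : f x < f γ := anti1 ⟨le_rfl, hγπ.le⟩ ⟨h.le, hxπ⟩ h
      rw [hfγ] at this
      exact ⟨this.le, fun he => absurd he this.ne⟩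
  · -- x ∈ (π, 2π]
    have hsx : Real.sin x ≤ 0 := by
      have : Real.sin (x - 2*π) ≤ 0 := by
        apply Real.sin_nonpos_of_nonpos_of_neg_pi_le <;> linarith
      rwa [Real.sin_sub_two_pi] at this
    have hterm : x * Real.sin x * Real.sin γ ≤ 0 := by
      have : x * Real.sin x ≤ 0 := mul_nonpos_of_nonneg_of_nonpos hx0 hsx
      exact mul_nonpos_of_nonpos_of_nonneg this hsγ.le
    have hsinlt : Real.sin γ < γ := Real.sin_lt hγ0
    have hcos1 : Real.cos γ < 1 := by
      have := Real.cos_lt_cos_of_nonneg_of_le_pi le_rfl hγπ.le hγ0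
      simpa using this
    have hcosm1 : -1 < Real.cos γ := by
      have := Real.cos_lt_cos_of_nonneg_of_le_pi hγ0.le le_rfl hγπ
      simpa [Real.cos_pi] using this
    have hcx1 : Real.cos x ≤ 1 := Real.cos_le_one x
    have hcxm1 : -1 ≤ Real.cos x := Real.neg_one_le_cos x
    have hneg : f x < 0 := by
      simp only [hf]
      rcases le_or_gt 0 (γ * Real.cos γ + Real.sin γ) with hC | hC
      · nlinarith [mul_le_of_le_one_left hC hcx1, mul_pos (sub_pos.2 hcos1) (sub_pos.2 hsinlt)]
      · nlinarith [mul_pos (by linarith : (0:ℝ) < 1 + Real.cos γ) (by linarith : (0:ℝ) < γ + Real.sin γ)]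
    exact ⟨hneg.le, fun he => absurd he hneg.ne⟩

/-- The function `F(x;γ) = cos x (γ cos γ + sin γ) + x sin x sin γ - sin γ cos γ - γ`
for `0 < γ < π` satisfies `F(0;γ) = 2 sin²(γ/2)(sin γ - γ) < 0`, `F(γ;γ) = 0`, and
`F(x;γ) ≤ 0` on `[-2π, 2π]` with equality only at `x = ±γ`. -/
theorem biarc_length_monotone_aux (γ : ℝ) (hγ0 : 0 < γ) (hγπ : γ < π) :
    (Real.cos 0 * (γ * Real.cos γ + Real.sin γ) + 0 * Real.sin 0 * Real.sin γ
        - Real.sin γ * Real.cos γ - γ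
      = 2 * Real.sin (γ/2)^2 * (Real.sin γ - γ)) ∧
    (Real.cos 0 * (γ * Real.cos γ + Real.sin γ) + 0 * Real.sin 0 * Real.sin γ
        - Real.sin γ * Real.cos γ - γ < 0) ∧
    (Real.cos γ * (γ * Real.cos γ + Real.sin γ) + γ * Real.sin γ * Real.sin γ
        - Real.sin γ * Real.cos γ - γ = 0) ∧
    (∀ x ∈ Set.Icc (-(2*π)) (2*π),
      Real.cos x * (γ * Real.cos γ + Real.sin γ) + x * Real.sin x * Real.sin γ
        - Real.sin γ * Real.cos γ - γ ≤ 0 ∧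
      (Real.cos x * (γ * Real.cos γ + Real.sin γ) + x * Real.sin x * Real.sin γ
        - Real.sin γ * Real.cos γ - γ = 0 → x = γ ∨ x = -γ)) := by
  have hsγ : 0 < Real.sin γ := Real.sin_pos_of_pos_of_lt_pi hγ0 hγπ
  have hsinlt : Real.sin γ < γ := Real.sin_lt hγ0
  have hcos1 : Real.cos γ < 1 := by
    have := Real.cos_lt_cos_of_nonneg_of_le_pi le_rfl hγπ.le hγ0
    simpa using this
  have hhalf : Real.cos γ = 1 - 2 * Real.sin (γ/2)^2 := by
    have h2 : γ = 2 * (γ/2) := by ring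
    rw [h2, Real.cos_two_mul, Real.cos_sq']
    ring
  refine ⟨?_, ?_, ?_, ?_⟩
  · rw [Real.cos_zero, Real.sin_zero, hhalf]; ring
  · rw [Real.cos_zero, Real.sin_zero]
    nlinarith [mul_pos (sub_pos.2 hcos1) (sub_pos.2 hsinlt)]
  · linear_combination γ * Real.sin_sq_add_cos_sq γ
  · intro x hx
    rcases le_or_gt 0 x with h0 | h0
    · obtain ⟨h1, h2⟩ := main_aux γ hγ0 hγπ x h0 hx.2
      exact ⟨h1, fun he => Or.inl (h2 he)⟩
    · obtain ⟨h1, h2⟩ := main_aux γ hγ0 hγπ (-x) (by linarith) (by linarith [hx.1])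
      rw [Real.cos_neg, Real.sin_neg] at h1 h2
      constructor
      · calc Real.cos x * (γ * Real.cos γ + Real.sin γ) + x * Real.sin x * Real.sin γ
            - Real.sin γ * Real.cos γ - γ
            = Real.cos x * (γ * Real.cos γ + Real.sin γ) + -x * -Real.sin x * Real.sin γ
            - Real.sin γ * Real.cos γ - γ := by ring
        _ ≤ 0 := h1
      · intro he
        right
        have : -x = γ := h2 (by linarith [he]; )
        linarith
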